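/- Let $F : X \rightrightarrows Y$ be a closed convex set-valued mapping between Banach spaces, $A \subseteq X$ closed convex, $\bar y \in Y$, $S := F^{-1}(\bar y) \cap A$, $\bar x \in S$. Suppose there exist $\tau, \delta > 0$ such that $d(x,S) \leq \tau(d(\bar y, F(x)) + d(x,A))$ for all $x \in B(\bar x,\delta)$. Then for any $\eta \in (0, 1/\tau)$, any $x \in S \cap B(\bar x, \delta)$, and any $\eta_1, \eta_2 \geq 0$ with $\eta_1 + \eta_2 < \eta$, one has $DF^{-1}(\bar y, x)(\eta_1 B_Y) \cap (T(A,x) + \eta_2 B_X) \subseteq T(S,x) + B_X$. -/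

import Mathlib

open Set Metric Filter Topology Pointwise

noncomputable section

/-- Contingent cone of a convex set: closure of ⋃_{t>0} (A - a)/t. -/
def contCone {X : Type*} [NormedAddCommGroup X] [NormedSpace ℝ X] (A : Set X) (a : X) : Set X :=
  closure {v : X | ∃ t : ℝ, 0 < t ∧ a + t • v ∈ A}

lemma shrink_mem {X : Type*} [NormedAddCommGroup X] [NormedSpace ℝ X] {C : Set X}
    (hC : Convex ℝ C) {a v : X} {t t' : ℝ} (ht' : 0 < t') (htt : t' ≤ t)
    (hv : a + t • v ∈ C) (ha : a ∈ C) : a + t' • v ∈ C := by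
  have ht : 0 < t := lt_of_lt_of_le ht' htt
  have key : (1 - t'/t) • a + (t'/t) • (a + t • v) = a + t' • v := by
    rw [smul_add, smul_smul, div_mul_cancel₀ _ ht.ne']
    module
  rw [← key]
  exact hC ha hv (by rw [sub_nonneg]; exact (div_le_one ht).mpr htt)
    (by positivity) (by ring)

set_option maxHeartbeats 1000000 in
theorem stmt10 {X Y : Type*} [NormedAddCommGroup X] [NormedSpace ℝ X] [CompleteSpace X]
    [NormedAddCommGroup Y] [NormedSpace ℝ Y] [CompleteSpace Y]
    (F : X → Set Y) (hFcl : IsClosed {p : X × Y | p.2 ∈ F p.1})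
    (hFcv : Convex ℝ {p : X × Y | p.2 ∈ F p.1})
    (A : Set X) (hAcl : IsClosed A) (hAcv : Convex ℝ A)
    (ybar : Y) (xbar : X) (hxbar : xbar ∈ {x : X | ybar ∈ F x} ∩ A)
    (τ δ : ℝ) (hτ : 0 < τ) (hδ : 0 < δ)
    (hsub : ∀ x ∈ ball xbar δ,
      EMetric.infEdist x ({x : X | ybar ∈ F x} ∩ A) ≤
        ENNReal.ofReal τ * (EMetric.infEdist ybar (F x) + EMetric.infEdist x A)) :
    ∀ η : ℝ, 0 < η → η < 1 / τ →
      ∀ x ∈ ({x : X | ybar ∈ F x} ∩ A) ∩ ball xbar δ,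
        ∀ η₁ η₂ : ℝ, 0 ≤ η₁ → 0 ≤ η₂ → η₁ + η₂ < η →
          {u : X | ∃ v ∈ closedBall (0 : Y) η₁,
              (u, v) ∈ contCone {p : X × Y | p.2 ∈ F p.1} (x, ybar)} ∩
            (contCone A x + closedBall (0 : X) η₂) ⊆
          contCone ({x : X | ybar ∈ F x} ∩ A) x + closedBall (0 : X) 1 := by
  intro η hη hητ x hx η₁ η₂ hη₁ hη₂ hsum u hu
  obtain ⟨⟨hxF, hxA⟩, hxball⟩ := hx
  obtain ⟨⟨v, hv, huv⟩, hu2⟩ := hu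
  rw [Set.mem_add] at hu2
  obtain ⟨w, hw, b, hb, hwb⟩ := hu2
  set c := η₁ + η₂ with hc
  have hτη : τ * η < 1 := by
    rw [lt_div_iff₀ hτ] at hητ; linarith
  have hτc : τ * c < 1 := by nlinarith
  set ε := (1 - τ * c)/(3*τ + 2) with hε
  have hεpos : 0 < ε := div_pos (by linarith) (by linarith)
  have hεeq : τ * c + (3*τ + 2) * ε = 1 := by
    rw [hε]; field_simp; ring
  -- approximate (u,v) in the cone of gph
  obtain ⟨⟨u₀, v₀⟩, hp₀, hdist₀⟩ := Metric.mem_closure_iff.mp huv ε hεpos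
  obtain ⟨t₁, ht₁, hmem₁⟩ := hp₀
  have hmax : max (dist u u₀) (dist v v₀) < ε := by
    rw [Prod.dist_eq] at hdist₀; exact hdist₀
  have du : dist u u₀ < ε := (le_max_left _ _).trans_lt hmax
  have dv : dist v v₀ < ε := (le_max_right _ _).trans_lt hmax
  -- approximate w in the cone of A
  obtain ⟨w₀, hw₀, hdw⟩ := Metric.mem_closure_iff.mp hw ε hεpos
  obtain ⟨t₂, ht₂, hmem₂⟩ := hw₀
  set D := dist x xbar with hD
  have hDδ : D < δ := mem_ball.mp hxball
  set t := min (min t₁ t₂) ((δ - D)/(‖u₀‖ + 1)) with htdef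
  have ht : 0 < t := lt_min (lt_min ht₁ ht₂)
    (div_pos (by linarith) (by positivity))
  have hgph : (x, ybar) + t • (u₀, v₀) ∈ {p : X × Y | p.2 ∈ F p.1} :=
    shrink_mem hFcv ht (le_trans (min_le_left _ _) (min_le_left _ _)) hmem₁ hxF
  have hA' : x + t • w₀ ∈ A :=
    shrink_mem hAcv ht (le_trans (min_le_left _ _) (min_le_right _ _)) hmem₂ hxA
  set xt := x + t • u₀ with hxt
  have hmF : ybar + t • v₀ ∈ F xt := by
    simpa [Prod.smul_mk] using hgph
  have hxtball : xt ∈ ball xbar δ := by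
    have ht3 : t ≤ (δ - D)/(‖u₀‖ + 1) := min_le_right _ _
    have ht4 : t * (‖u₀‖ + 1) ≤ δ - D :=
      (le_div_iff₀ (by positivity)).mp ht3
    have hd1 : dist xt x = t * ‖u₀‖ := by
      rw [dist_eq_norm]
      have : xt - x = t • u₀ := by rw [hxt]; abel
      rw [this, norm_smul, Real.norm_eq_abs, abs_of_pos ht]
    rw [mem_ball]
    calc dist xt xbar ≤ dist xt x + dist x xbar := dist_triangle _ _ _
      _ = t * ‖u₀‖ + D := by rw [hd1]
      _ < δ := by nlinarith
  set ρ := τ * (‖v₀‖ + ‖u₀ - w₀‖) with hρdef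
  have hρ0 : 0 ≤ ρ := by positivity
  have hF1 : EMetric.infEdist ybar (F xt) ≤ ENNReal.ofReal (t * ‖v₀‖) := by
    calc EMetric.infEdist ybar (F xt) ≤ edist ybar (ybar + t • v₀) :=
          EMetric.infEdist_le_edist_of_mem hmF
      _ = ENNReal.ofReal (t * ‖v₀‖) := by
          rw [edist_dist, dist_eq_norm]
          have : ybar - (ybar + t • v₀) = -(t • v₀) := by abel
          rw [this, norm_neg, norm_smul, Real.norm_eq_abs, abs_of_pos ht]
  have hA1 : EMetric.infEdist xt A ≤ ENNReal.ofReal (t * ‖u₀ - w₀‖) := by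
    calc EMetric.infEdist xt A ≤ edist xt (x + t • w₀) :=
          EMetric.infEdist_le_edist_of_mem hA'
      _ = ENNReal.ofReal (t * ‖u₀ - w₀‖) := by
          rw [edist_dist, dist_eq_norm]
          have : xt - (x + t • w₀) = t • (u₀ - w₀) := by
            rw [hxt, smul_sub]; abel
          rw [this, norm_smul, Real.norm_eq_abs, abs_of_pos ht]
  have hSle : EMetric.infEdist xt ({x : X | ybar ∈ F x} ∩ A) ≤ ENNReal.ofReal (t * ρ) := by
    calc EMetric.infEdist xt ({x : X | ybar ∈ F x} ∩ A)
        ≤ ENNReal.ofReal τ * (EMetric.infEdist ybar (F xt) + EMetric.infEdist xt A) :=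
          hsub xt hxtball
      _ ≤ ENNReal.ofReal τ * (ENNReal.ofReal (t * ‖v₀‖) + ENNReal.ofReal (t * ‖u₀ - w₀‖)) := by
          gcongr
      _ = ENNReal.ofReal (t * ρ) := by
          rw [← ENNReal.ofReal_add (by positivity) (by positivity),
            ← ENNReal.ofReal_mul hτ.le]
          rw [hρdef]; ring_nf
  have hSlt : EMetric.infEdist xt ({x : X | ybar ∈ F x} ∩ A) < ENNReal.ofReal (t * ρ + t * ε) :=
    lt_of_le_of_lt hSle (ENNReal.ofReal_lt_ofReal_iff (by positivity) |>.mpr (by nlinarith))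
  obtain ⟨s, hsS, hedist⟩ := EMetric.infEdist_lt_iff.mp hSlt
  have hds : dist xt s < t * ρ + t * ε := by
    rwa [edist_lt_ofReal] at hedist
  rw [Set.mem_add]
  refine ⟨(1/t) • (s - x), ?_, u - (1/t) • (s - x), ?_, by abel⟩
  · apply subset_closure
    refine ⟨t, ht, ?_⟩
    have h1 : x + t • ((1/t) • (s - x)) = s := by
      rw [smul_smul, mul_one_div, div_self ht.ne', one_smul]
      abel
    rw [h1]; exact hsS
  · have h1t : (1/t) • (t • u₀) = u₀ := by
      rw [smul_smul, one_div_mul_cancel ht.ne', one_smul]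
    have key : u - (1/t) • (s - x) = (u - u₀) + (1/t) • (xt - s) := by
      have : (1/t) • (xt - s) = (1/t) • x + u₀ - (1/t) • s := by
        rw [hxt, smul_sub, smul_add, h1t]; try abel
      rw [this, smul_sub]; abel
    have n1 : ‖u - u₀‖ < ε := by rw [← dist_eq_norm]; exact du
    have n2 : ‖(1/t) • (xt - s)‖ ≤ ρ + ε := by
      have h1tp : (0:ℝ) < 1/t := one_div_pos.mpr ht
      rw [norm_smul, Real.norm_eq_abs, abs_of_pos h1tp]
      have hre : t * (ρ + ε) = t * ρ + t * ε := by ring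
      calc (1/t) * ‖xt - s‖ ≤ (1/t) * (t * (ρ + ε)) := by
            refine mul_le_mul_of_nonneg_left ?_ h1tp.le
            rw [← dist_eq_norm, hre]; exact hds.le
        _ = ρ + ε := by rw [← mul_assoc, one_div_mul_cancel ht.ne', one_mul]
    have hvn : ‖v‖ ≤ η₁ := by rwa [mem_closedBall, dist_zero_right] at hv
    have hbn : ‖b‖ ≤ η₂ := by rwa [mem_closedBall, dist_zero_right] at hb
    have hv₀ : ‖v₀‖ ≤ η₁ + ε := by
      have : ‖v₀‖ ≤ ‖v‖ + ‖v₀ - v‖ := by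
        calc ‖v₀‖ = ‖v + (v₀ - v)‖ := by rw [add_sub_cancel]
          _ ≤ ‖v‖ + ‖v₀ - v‖ := norm_add_le _ _
      have h2 : ‖v₀ - v‖ < ε := by rw [← dist_eq_norm, dist_comm]; exact dv
      linarith
    have huw : u - w = b := by rw [← hwb]; abel
    have hu₀w₀ : ‖u₀ - w₀‖ ≤ η₂ + 2*ε := by
      have heq : u₀ - w₀ = (u₀ - u) + b + (w - w₀) := by rw [← huw]; abel
      have h1 : ‖u₀ - u‖ < ε := by rw [← dist_eq_norm, dist_comm]; exact du
      have h2 : ‖w - w₀‖ < ε := by rw [← dist_eq_norm]; exact hdw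
      calc ‖u₀ - w₀‖ = ‖(u₀ - u) + b + (w - w₀)‖ := by rw [heq]
        _ ≤ ‖(u₀ - u) + b‖ + ‖w - w₀‖ := norm_add_le _ _
        _ ≤ ‖u₀ - u‖ + ‖b‖ + ‖w - w₀‖ := by linarith [norm_add_le (u₀ - u) b]
        _ ≤ η₂ + 2*ε := by linarith
    have hρle : ρ ≤ τ * (c + 3*ε) := by
      rw [hρdef]
      apply mul_le_mul_of_nonneg_left _ hτ.le
      rw [hc]; linarith
    rw [mem_closedBall, dist_zero_right, key]
    calc ‖(u - u₀) + (1/t) • (xt - s)‖ ≤ ‖u - u₀‖ + ‖(1/t) • (xt - s)‖ := norm_add_le _ _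
      _ ≤ ε + (ρ + ε) := by linarith
      _ ≤ 1 := by nlinarith
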